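/- Let 𝒢 be a GRN with associated PRN ℛ, and let σ₁, σ₂ be two distinct appendage nodes of 𝒢 such that there is an appendage path from σ₁ to σ₂ in 𝒢. Then (σ₁,P) and (σ₂,R) are appendage nodes of ℛ and there is an appendage path from (σ₁,P) to (σ₂,R) in ℛ. -/

import Mathlib

open List Relation

/- In the PRN on `V × Bool`, the node `(v, false)` is the mRNA node `v^R`
   and `(v, true)` is the protein node `v^P`. -/

/-- Arrow relation of the PRN associated to a GRN with arrow relation `E`:
arrows `(v,R) → (v,P)` for every `v`, and `(u,P) → (v,R)` whenever `E u v`. -/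
def prnAdj {V : Type*} (E : V → V → Prop) : V × Bool → V × Bool → Prop :=
  fun a b =>
    (a.1 = b.1 ∧ a.2 = false ∧ b.2 = true) ∨
    (E a.1 b.1 ∧ a.2 = true ∧ b.2 = false)

/-- The lift of a path `σ₁ → ⋯ → σ_m` in the GRN to the path
`(σ₁,R) → (σ₁,P) → ⋯ → (σ_m,R) → (σ_m,P)` in the PRN. -/
def liftPath {V : Type*} (l : List V) : List (V × Bool) :=
  l.flatMap fun v => [(v, false), (v, true)]

/-- A simple path: a nonempty directed path visiting each node at most once. -/
def IsSimplePath {V : Type*} (E : V → V → Prop) (l : List V) : Prop :=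
  l ≠ [] ∧ l.Chain' E ∧ l.Nodup

/-- A simple path from `a` to `b`. -/
def IsSimplePathFrom {V : Type*} (E : V → V → Prop) (a b : V) (l : List V) : Prop :=
  IsSimplePath E l ∧ l.head? = some a ∧ l.getLast? = some b

/-- A node is simple if it lies on some simple path from the input to the output. -/
def IsSimpleNode {V : Type*} (E : V → V → Prop) (ι o v : V) : Prop :=
  ∃ l, IsSimplePathFrom E ι o l ∧ v ∈ l

/-- A node is super-simple if it lies on every simple path from the input to the output. -/
def IsSuperSimpleNode {V : Type*} (E : V → V → Prop) (ι o v : V) : Prop :=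
  ∀ l, IsSimplePathFrom E ι o l → v ∈ l

/-- A node is appendage if it lies on no simple path from the input to the output. -/
def IsAppendageNode {V : Type*} (E : V → V → Prop) (ι o v : V) : Prop :=
  ¬ IsSimpleNode E ι o v

/-- An appendage path from `a` to `b`: a simple path from `a` to `b` each of whose
nodes, except possibly `a` and `b`, is an appendage node. -/
def IsAppendagePath {V : Type*} (E : V → V → Prop) (ι o a b : V) (l : List V) : Prop :=
  IsSimplePathFrom E a b l ∧ ∀ v ∈ l, v ≠ a → v ≠ b → IsAppendageNode E ι o v

/-- A directed cycle: a nonempty closed directed walk visiting each of its nodes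
exactly once (a self-loop is a cycle of length one). -/
def IsCycle {V : Type*} (E : V → V → Prop) (c : List V) : Prop :=
  c ≠ [] ∧ c.Chain' E ∧ c.Nodup ∧
    ∃ a b, c.head? = some a ∧ c.getLast? = some b ∧ E b a

/-- Arrow relation of the appendage subnetwork: the induced subgraph on appendage nodes. -/
def appendageAdj {V : Type*} (E : V → V → Prop) (ι o : V) : V → V → Prop :=
  fun a b => E a b ∧ IsAppendageNode E ι o a ∧ IsAppendageNode E ι o b

/-- Two appendage nodes are path-equivalent if each is reachable from the other by a
directed path lying entirely within the appendage subnetwork. -/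
def PathEquiv {V : Type*} (E : V → V → Prop) (ι o a b : V) : Prop :=
  Relation.ReflTransGen (appendageAdj E ι o) a b ∧
  Relation.ReflTransGen (appendageAdj E ι o) b a

/-- A node `x` is between `a` and `b` if some input-to-output simple path visits
`a`, `x`, `b` in that order. -/
def Between {V : Type*} (E : V → V → Prop) (ι o a x b : V) : Prop :=
  ∃ l, IsSimplePathFrom E ι o l ∧ [a, x, b].Sublist l

section Aux

variable {V : Type*} {E : V → V → Prop}

lemma mem_liftPath {v : V} {b : Bool} {l : List V} :
    (v, b) ∈ liftPath l ↔ v ∈ l := by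
  cases b <;> simp [liftPath, List.mem_flatMap, Prod.ext_iff]

lemma liftPath_cons (a : V) (t : List V) :
    liftPath (a :: t) = (a, false) :: (a, true) :: liftPath t := by
  simp [liftPath]

lemma getLast?_liftPath : ∀ (l : List V),
    (liftPath l).getLast? = l.getLast?.map (fun v => (v, true))
  | [] => rfl
  | [a] => rfl
  | a :: b :: t => by
    rw [liftPath_cons, liftPath_cons, List.getLast?_cons_cons, List.getLast?_cons_cons,
      ← liftPath_cons, getLast?_liftPath (b :: t), List.getLast?_cons_cons]

lemma nodup_liftPath : ∀ {l : List V}, (liftPath l).Nodup → l.Nodup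
  | [], _ => List.nodup_nil
  | a :: t, h => by
    rw [liftPath_cons] at h
    have h1 := h.of_cons
    refine List.nodup_cons.2 ⟨fun hmem => ?_, nodup_liftPath h1.of_cons⟩
    exact (List.nodup_cons.1 h).1 (by simp [mem_liftPath.2 hmem])

lemma chain'_liftPath : ∀ {l : List V}, l.Chain' E →
    (liftPath l).Chain' (prnAdj E)
  | [], _ => List.isChain_nil
  | [a], _ => by simp [liftPath, prnAdj, List.Chain', List.isChain_cons_cons]
  | a :: b :: t, h => by
    simp only [List.Chain'] at h ⊢
    rw [List.isChain_cons_cons] at h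
    rw [liftPath_cons, liftPath_cons, List.isChain_cons_cons, List.isChain_cons_cons]
    refine ⟨Or.inl ⟨rfl, rfl, rfl⟩, Or.inr ⟨h.1, rfl, rfl⟩, ?_⟩
    rw [← liftPath_cons]
    exact chain'_liftPath h.2

/-- Every chain in the PRN starting at an `R`-node and ending at a `P`-node
is the lift of a chain in the GRN. -/
lemma shape : ∀ (n : ℕ) (L : List (V × Bool)) (v : V), L.length ≤ n →
    L.Chain' (prnAdj E) → L.head? = some (v, false) →
    (∀ w : V, ∀ b : Bool, L.getLast? = some (w, b) → b = true) →
    ∃ l : List V, L = liftPath l ∧ l.head? = some v ∧ l.Chain' E := by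
  intro n
  induction n with
  | zero =>
    intro L v hlen _ hhead _
    rw [Nat.le_zero, List.length_eq_zero_iff] at hlen
    subst hlen
    simp at hhead
  | succ n ih =>
    intro L v hlen hch hhead hlast
    cases L with
    | nil => simp at hhead
    | cons a L' =>
      obtain rfl : a = (v, false) := Option.some_injective _ (by simpa using hhead)
      cases L' with
      | nil => exact absurd (hlast v false rfl) (by simp)
      | cons b L'' =>
        simp only [List.Chain'] at hch
        rw [List.isChain_cons_cons] at hch
        have hb : b = (v, true) := by
          rcases hch.1 with ⟨h1, _, h3⟩ | ⟨_, h2, _⟩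
          · exact Prod.ext h1.symm h3
          · simp at h2
        subst hb
        cases L'' with
        | nil =>
          exact ⟨[v], by simp [liftPath], rfl, List.isChain_singleton v⟩
        | cons c L''' =>
          have hch2 := hch.2
          rw [List.isChain_cons_cons] at hch2
          obtain ⟨hE, -, hc2⟩ := hch2.1.resolve_left (by rintro ⟨-, h, -⟩; simp at h)
          have hc : c = (c.1, false) := Prod.ext rfl hc2
          have hlen' : (c :: L''').length ≤ n := by
            simp only [List.length_cons] at hlen ⊢; omega
          obtain ⟨l', hLl, hhl, hcl⟩ := ih (c :: L''') c.1 hlen' hch2.2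
            (by rw [← hc]; rfl) (fun w b hb => hlast w b (by
              rw [List.getLast?_cons_cons, List.getLast?_cons_cons]; exact hb))
          refine ⟨v :: l', by rw [liftPath_cons, hLl], rfl, ?_⟩
          simp only [List.Chain']
          rw [List.isChain_cons]
          refine ⟨fun y hy => ?_, hcl⟩
          rw [hhl] at hy
          obtain rfl : c.1 = y := by simpa using hy
          exact hE
        
/-- If `v` is an appendage node of the GRN, then `(v,b)` is an appendage node
of the PRN. -/
lemma appendage_lift {ι o v : V} (h : IsAppendageNode E ι o v) (b : Bool) :
    IsAppendageNode (prnAdj E) (ι, false) (o, true) (v, b) := by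
  rintro ⟨L, ⟨⟨hne, hch, hnd⟩, hhead, hlast⟩, hmem⟩
  obtain ⟨l, rfl, hhl, hcl⟩ := shape L.length L ι le_rfl hch hhead
    (fun w b hb => by rw [hlast] at hb; exact (Prod.ext_iff.1 (Option.some_injective _ hb)).2.symm)
  have hlast' : l.getLast? = some o := by
    rw [getLast?_liftPath] at hlast
    cases hl : l.getLast? with
    | none => rw [hl] at hlast; simp at hlast
    | some w =>
      rw [hl] at hlast
      simp only [Option.map_some] at hlast
      obtain ⟨rfl, -⟩ := Prod.ext_iff.1 (Option.some_injective _ hlast)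
      rfl
  exact h ⟨l, ⟨⟨fun h' => by simp [h'] at hhl, hcl, nodup_liftPath hnd⟩, hhl, hlast'⟩,
    mem_liftPath.1 hmem⟩

lemma liftPath_nodup : ∀ {l : List V}, l.Nodup → (liftPath l).Nodup
  | [], _ => by simp [liftPath]
  | a :: t, h => by
    rw [liftPath_cons]
    rcases List.nodup_cons.1 h with ⟨ha, ht⟩
    refine List.nodup_cons.2 ⟨?_, List.nodup_cons.2
      ⟨fun hm => ha (mem_liftPath.1 hm), liftPath_nodup ht⟩⟩
    simp only [List.mem_cons]
    rintro (h' | h')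
    · simp at h'
    · exact ha (mem_liftPath.1 h')

end Aux

/-- If `σ₁ ≠ σ₂` are appendage nodes of the GRN and there is an
appendage path from `σ₁` to `σ₂` in the GRN, then `(σ₁,P)` and `(σ₂,R)` are appendage
nodes of the PRN and there is an appendage path from `(σ₁,P)` to `(σ₂,R)` in the PRN. -/
theorem stmt_9 {V : Type*} [Fintype V] (E : V → V → Prop) (ι o σ₁ σ₂ : V)
    (hne : σ₁ ≠ σ₂)
    (h₁ : IsAppendageNode E ι o σ₁) (h₂ : IsAppendageNode E ι o σ₂)
    (hpath : ∃ l, IsAppendagePath E ι o σ₁ σ₂ l) :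
    IsAppendageNode (prnAdj E) (ι, false) (o, true) (σ₁, true) ∧
    IsAppendageNode (prnAdj E) (ι, false) (o, true) (σ₂, false) ∧
    ∃ L, IsAppendagePath (prnAdj E) (ι, false) (o, true) (σ₁, true) (σ₂, false) L := by
  refine ⟨appendage_lift h₁ true, appendage_lift h₂ false, ?_⟩
  obtain ⟨l, ⟨⟨hlne, hlch, hlnd⟩, hlh, hll⟩, happ⟩ := hpath
  cases l with
  | nil => simp at hlh
  | cons a t =>
    obtain rfl : σ₁ = a := (Option.some_injective _ (by simpa using hlh)).symm
    cases t with
    | nil =>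
      exact absurd (Option.some_injective _ (by simpa using hll)) hne
    | cons b t' =>
      set t : List V := b :: t' with ht_def
      have htne : t ≠ [] := by simp [ht_def]
      have htl : t.getLast? = some σ₂ := by
        rw [ht_def, ← List.getLast?_cons_cons (a := σ₁)]; exact hll
      have hgl : t.getLast htne = σ₂ :=
        Option.some_injective _ (by rw [← List.getLast?_eq_getLast htne]; exact htl)
      have hmid : t.dropLast ++ [σ₂] = t := by
        rw [← hgl]; exact List.dropLast_concat_getLast htne
      set mid : List V := t.dropLast with hmid_def
      set L : List (V × Bool) := (σ₁, true) :: (liftPath mid ++ [(σ₂, false)]) with hL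
      have hkey : liftPath (σ₁ :: t) = (σ₁, false) :: (L ++ [(σ₂, true)]) := by
        rw [← hmid, hL]
        simp [liftPath]
      -- facts about l
      have hchl : (liftPath (σ₁ :: t)).Chain' (prnAdj E) := chain'_liftPath hlch
      have hndl : (liftPath (σ₁ :: t)).Nodup := liftPath_nodup hlnd
      have hinfix : L <:+: liftPath (σ₁ :: t) := ⟨[(σ₁, false)], [(σ₂, true)], by
        rw [hkey]; simp⟩
      have hσ₁nt : σ₁ ∉ t := (List.nodup_cons.1 hlnd).1
      have hσ₂nmid : σ₂ ∉ mid := by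
        have := (List.nodup_cons.1 hlnd).2
        rw [← hmid] at this
        have := List.disjoint_of_nodup_append this
        exact fun hm => this hm (by simp)
      refine ⟨L, ⟨⟨by simp [hL], hchl.infix hinfix, hndl.sublist hinfix.sublist⟩,
        by simp [hL], by rw [hL, ← List.cons_append, List.getLast?_concat]⟩, ?_⟩
      intro x hx hx1 hx2
      rw [hL] at hx
      simp only [List.mem_cons, List.mem_append, List.mem_singleton] at hx
      rcases hx with rfl | hx | rfl | h
      · exact absurd rfl hx1
      · obtain ⟨xv, xb⟩ := x
        have hx1m : xv ∈ mid := mem_liftPath.1 hx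
        have hx1t : xv ∈ t := (List.dropLast_sublist t).subset hx1m
        have hne1 : xv ≠ σ₁ := fun h => hσ₁nt (h ▸ hx1t)
        have hne2 : xv ≠ σ₂ := fun h => hσ₂nmid (h ▸ hx1m)
        exact appendage_lift (happ xv (List.mem_cons_of_mem _ hx1t) hne1 hne2) xb
      · exact absurd rfl hx2
      · exact absurd h List.not_mem_nil
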